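/- Fix natural numbers ℓ, m, p, q with 2 ≤ ℓ, ℓ < m, 1 ≤ p, p < q; set n := p*(ℓ−1) + q*(m−1) + 2 and let r := (ℓ : ℝ) + m + (2 − p − q)/q. Then there exist real constants c > 0 and C > 0 such that for every real L ≥ 2, c * L^r ≤ (MeasureTheory.volume {(x,y) : ℝ × ℝ | |x| ≤ L^ℓ ∧ |y| ≤ L^m ∧ |x|^p * |y|^q ≤ L^n}).toReal ≤ C * L^r, where L^r denotes Real.rpow L r. -/

import Mathlib

open MeasureTheory Set ENNReal

lemma volume_rect (a b : ℝ) : volume (Set.Icc (-a) a ×ˢ Set.Icc (-b) b)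
    = ENNReal.ofReal (2*a) * ENNReal.ofReal (2*b) := by
  rw [Measure.volume_eq_prod, Measure.prod_prod, Real.volume_Icc, Real.volume_Icc]
  ring_nf

/-- With `n = p(ℓ-1) + q(m-1) + 2` and `r = ℓ + m + (2-p-q)/q`, the area of the region
`|x| ≤ L^ℓ, |y| ≤ L^m, |x|^p |y|^q ≤ L^n` is `Θ(L^r)` for `L ≥ 2`. -/
theorem stmt_6 (ℓ m p q : ℕ) (hℓ : 2 ≤ ℓ) (hlm : ℓ < m) (hp : 1 ≤ p) (hpq : p < q)
    (n : ℕ) (hn : n = p * (ℓ - 1) + q * (m - 1) + 2)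
    (r : ℝ) (hr : r = (ℓ : ℝ) + (m : ℝ) + (2 - (p : ℝ) - (q : ℝ)) / (q : ℝ)) :
    ∃ c C : ℝ, 0 < c ∧ 0 < C ∧ ∀ L : ℝ, 2 ≤ L →
      c * L ^ r ≤
        (MeasureTheory.volume {xy : ℝ × ℝ | |xy.1| ≤ L ^ ℓ ∧ |xy.2| ≤ L ^ m ∧
          |xy.1| ^ p * |xy.2| ^ q ≤ L ^ n}).toReal ∧
      (MeasureTheory.volume {xy : ℝ × ℝ | |xy.1| ≤ L ^ ℓ ∧ |xy.2| ≤ L ^ m ∧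
          |xy.1| ^ p * |xy.2| ^ q ≤ L ^ n}).toReal ≤ C * L ^ r := by
  have hq2 : 2 ≤ q := by omega
  have hq0 : (0:ℝ) < q := by exact_mod_cast (by omega : 0 < q)
  have hp0 : (0:ℝ) < p := by exact_mod_cast hp
  have hpq' : (p:ℝ) < q := by exact_mod_cast hpq
  have hp1 : (1:ℝ) ≤ p := by exact_mod_cast hp
  have hq2' : (2:ℝ) ≤ q := by exact_mod_cast hq2
  have hncast : (n:ℝ) = p*ℓ + q*m + 2 - p - q := by
    have h1 : ((ℓ - 1 : ℕ) : ℝ) = (ℓ:ℝ) - 1 := by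
      rw [Nat.cast_sub (by omega)]; norm_num
    have h2 : ((m - 1 : ℕ) : ℝ) = (m:ℝ) - 1 := by
      rw [Nat.cast_sub (by omega)]; norm_num
    subst hn; push_cast [h1, h2]; ring
  set ρ : ℝ := (2:ℝ) ^ ((p:ℝ)/q - 1) with hρdef
  have hρ0 : 0 < ρ := Real.rpow_pos_of_pos two_pos _
  have hρ1 : ρ < 1 := by
    apply Real.rpow_lt_one_of_one_lt_of_neg one_lt_two
    rw [sub_neg, div_lt_one hq0]; exact hpq'
  have h1ρ : (0:ℝ) < 1 - ρ := by linarith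
  refine ⟨4, 4 * (2:ℝ) ^ ((p:ℝ)/q) / (1 - ρ), by norm_num,
    div_pos (by positivity) h1ρ, ?_⟩
  intro L hL
  have hL1 : (1:ℝ) < L := by linarith
  have hL0 : (0:ℝ) < L := by linarith
  set S : Set (ℝ × ℝ) := {xy : ℝ × ℝ | |xy.1| ≤ L ^ ℓ ∧ |xy.2| ≤ L ^ m ∧
    |xy.1| ^ p * |xy.2| ^ q ≤ L ^ n} with hSdef
  -- finiteness
  have hfin : volume S ≠ ⊤ := by
    have hsub : S ⊆ Set.Icc (-(L^ℓ)) (L^ℓ) ×ˢ Set.Icc (-(L^m)) (L^m) := by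
      rintro ⟨x, y⟩ ⟨h1, h2, -⟩
      exact ⟨abs_le.1 h1, abs_le.1 h2⟩
    refine ne_top_of_le_ne_top ?_ (measure_mono hsub)
    rw [volume_rect]
    exact ENNReal.mul_ne_top ENNReal.ofReal_ne_top ENNReal.ofReal_ne_top
  constructor
  · -- lower bound
    set e : ℝ := (m:ℝ) + (2 - p - q)/q with hedef
    set y1 : ℝ := L ^ e with hy1def
    have hy1pos : 0 < y1 := Real.rpow_pos_of_pos hL0 _
    have hy1B : y1 ≤ L ^ m := by
      rw [← Real.rpow_natCast L m]
      apply Real.rpow_le_rpow_of_exponent_le hL1.le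
      have hnn : (2 - (p:ℝ) - q)/q ≤ 0 :=
        div_nonpos_of_nonpos_of_nonneg (by linarith) hq0.le
      rw [hedef]; linarith
    have hsub : Set.Icc (-(L^ℓ)) (L^ℓ) ×ˢ Set.Icc (-y1) y1 ⊆ S := by
      rintro ⟨x, y⟩ ⟨hx, hy⟩
      simp only [Set.mem_Icc] at hx hy
      have hax : |x| ≤ L ^ ℓ := abs_le.2 hx
      have hay : |y| ≤ y1 := abs_le.2 hy
      refine ⟨hax, hay.trans hy1B, ?_⟩
      calc |x| ^ p * |y| ^ q ≤ (L^ℓ) ^ p * y1 ^ q :=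
            mul_le_mul (pow_le_pow_left₀ (abs_nonneg x) hax p)
              (pow_le_pow_left₀ (abs_nonneg y) hay q) (by positivity) (by positivity)
        _ = L ^ n := by
            rw [← Real.rpow_natCast L ℓ, ← Real.rpow_natCast (L ^ (ℓ:ℝ)) p,
              ← Real.rpow_natCast y1 q, hy1def, ← Real.rpow_mul hL0.le,
              ← Real.rpow_mul hL0.le, ← Real.rpow_add hL0, ← Real.rpow_natCast L n]
            congr 1
            rw [hedef, add_mul, div_mul_cancel₀ _ (ne_of_gt hq0)]
            linarith [hncast]
    have hvol : (volume (Set.Icc (-(L^ℓ)) (L^ℓ) ×ˢ Set.Icc (-y1) y1)).toReal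
        = 4 * L ^ r := by
      rw [volume_rect, ← ENNReal.ofReal_mul (by positivity),
        ENNReal.toReal_ofReal (by positivity)]
      have h4 : L ^ r = L ^ ℓ * y1 := by
        rw [hy1def, ← Real.rpow_natCast L ℓ, ← Real.rpow_add hL0]
        congr 1
        rw [hr, hedef]; ring
      rw [h4]; ring
    calc (4:ℝ) * L ^ r = (volume (Set.Icc (-(L^ℓ)) (L^ℓ) ×ˢ Set.Icc (-y1) y1)).toReal :=
          hvol.symm
      _ ≤ (volume S).toReal := ENNReal.toReal_mono hfin (measure_mono hsub)
  · -- upper bound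
    set t : ℕ → ℝ := fun j => L ^ ℓ * (2:ℝ)⁻¹ ^ (j+1) with htdef
    have htpos : ∀ j, 0 < t j := fun j => by positivity
    set cj : ℕ → ℝ := fun j => L ^ ((n:ℝ)/q) * (t j) ^ (-(p:ℝ)/q) with hcjdef
    have hcjpos : ∀ j, 0 < cj j := fun j =>
      mul_pos (Real.rpow_pos_of_pos hL0 _) (Real.rpow_pos_of_pos (htpos j) _)
    set R : ℕ → Set (ℝ × ℝ) := fun j =>
      Set.Icc (-(L^ℓ * (2:ℝ)⁻¹ ^ j)) (L^ℓ * (2:ℝ)⁻¹ ^ j) ×ˢ Set.Icc (-(cj j)) (cj j)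
      with hRdef
    set Z : Set (ℝ × ℝ) := ({0} : Set ℝ) ×ˢ (Set.univ : Set ℝ) with hZdef
    have hsub2 : S ⊆ Z ∪ ⋃ j, R j := by
      rintro ⟨x, y⟩ ⟨h1, h2, h3⟩
      by_cases hx0 : x = 0
      · left; exact ⟨hx0, trivial⟩
      right
      have hxpos : 0 < |x| := abs_pos.2 hx0
      have hex : ∃ j : ℕ, L ^ ℓ * (2:ℝ)⁻¹ ^ (j+1) < |x| := by
        obtain ⟨k, hk⟩ := exists_pow_lt_of_lt_one
          (div_pos hxpos (by positivity : (0:ℝ) < L ^ ℓ))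
          (by norm_num : (2:ℝ)⁻¹ < 1)
        refine ⟨k, ?_⟩
        have hk' : (2:ℝ)⁻¹ ^ (k+1) ≤ (2:ℝ)⁻¹ ^ k :=
          pow_le_pow_of_le_one (by norm_num) (by norm_num) (Nat.le_succ k)
        have hlt := hk'.trans_lt hk
        rw [lt_div_iff₀ (by positivity : (0:ℝ) < L ^ ℓ)] at hlt
        linarith [hlt]
      set j := Nat.find hex with hjdef
      have hj : L ^ ℓ * (2:ℝ)⁻¹ ^ (j+1) < |x| := Nat.find_spec hex
      have hjx : |x| ≤ L ^ ℓ * (2:ℝ)⁻¹ ^ j := by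
        by_cases hj0 : j = 0
        · rw [hj0]; simpa using h1
        · have hlt : j - 1 < Nat.find hex := by rw [← hjdef]; omega
          have hmin := Nat.find_min hex hlt
          push_neg at hmin
          rwa [(by omega : j - 1 + 1 = j)] at hmin
      refine Set.mem_iUnion.2 ⟨j, ?_⟩
      refine ⟨abs_le.1 hjx, abs_le.1 ?_⟩
      -- |y| ≤ cj j
      have hty : (t j) ^ p * |y| ^ q ≤ L ^ n :=
        le_trans (mul_le_mul_of_nonneg_right
          (pow_le_pow_left₀ (htpos j).le hj.le p) (by positivity)) h3
      have hcq : (cj j) ^ q = L ^ n / (t j) ^ p := by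
        rw [hcjdef]
        rw [← Real.rpow_natCast (L ^ ((n:ℝ)/q) * (t j) ^ (-(p:ℝ)/q)) q,
          Real.mul_rpow (by positivity) (by positivity),
          ← Real.rpow_mul hL0.le, ← Real.rpow_mul (htpos j).le,
          div_mul_cancel₀ _ (ne_of_gt hq0), div_mul_cancel₀ _ (ne_of_gt hq0),
          Real.rpow_neg (htpos j).le, Real.rpow_natCast, Real.rpow_natCast,
          ← div_eq_mul_inv]
      have hyq : |y| ^ q ≤ (cj j) ^ q := by
        rw [hcq, le_div_iff₀ (by positivity)]
        calc |y| ^ q * (t j) ^ p = (t j) ^ p * |y| ^ q := by ring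
          _ ≤ L ^ n := hty
      exact le_of_pow_le_pow_left₀ (by omega) (hcjpos j).le hyq
    -- volume computations
    have hZ0 : volume Z = 0 := by
      rw [hZdef, Measure.volume_eq_prod, Measure.prod_prod, Real.volume_singleton,
        zero_mul]
    have hL2 : ∀ a b : ℝ, L ^ a * L ^ b = L ^ (a+b) :=
      fun a b => (Real.rpow_add hL0 a b).symm
    have h22 : ∀ a b : ℝ, (2:ℝ) ^ a * 2 ^ b = 2 ^ (a+b) :=
      fun a b => (Real.rpow_add two_pos a b).symm
    have hkey : ∀ j : ℕ, L ^ ℓ * (2:ℝ)⁻¹ ^ j * cj j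
        = (L ^ r * (2:ℝ) ^ ((p:ℝ)/q)) * ρ ^ j := by
      intro j
      have h2j : ∀ k : ℕ, ((2:ℝ)⁻¹) ^ k = (2:ℝ) ^ (-(k:ℝ)) := by
        intro k
        rw [Real.rpow_neg (by norm_num), Real.rpow_natCast]
        exact inv_pow 2 k
      rw [hcjdef, htdef]
      simp only [h2j]
      rw [Real.mul_rpow (by positivity) (Real.rpow_pos_of_pos two_pos _).le,
        ← Real.rpow_natCast L ℓ, ← Real.rpow_mul hL0.le,
        ← Real.rpow_mul (by norm_num : (0:ℝ) ≤ 2),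
        hρdef, ← Real.rpow_natCast ((2:ℝ) ^ ((p:ℝ)/q - 1)) j,
        ← Real.rpow_mul (by norm_num : (0:ℝ) ≤ 2)]
      calc L ^ (ℓ:ℝ) * 2 ^ (-(j:ℝ)) *
            (L ^ ((n:ℝ)/q) * (L ^ ((ℓ:ℝ) * (-(p:ℝ)/q)) * 2 ^ (-((j+1:ℕ):ℝ) * (-(p:ℝ)/q))))
          = (L ^ (ℓ:ℝ) * L ^ ((n:ℝ)/q) * L ^ ((ℓ:ℝ) * (-(p:ℝ)/q))) *
            (2 ^ (-(j:ℝ)) * 2 ^ (-((j+1:ℕ):ℝ) * (-(p:ℝ)/q))) := by ring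
        _ = L ^ ((ℓ:ℝ) + (n:ℝ)/q + (ℓ:ℝ) * (-(p:ℝ)/q)) *
            2 ^ (-(j:ℝ) + -((j+1:ℕ):ℝ) * (-(p:ℝ)/q)) := by
            rw [hL2, hL2, h22]
        _ = L ^ r * 2 ^ ((p:ℝ)/q + ((p:ℝ)/q - 1) * (j:ℝ)) := by
            congr 1
            · congr 1
              rw [hr]; field_simp; linarith [hncast]
            · congr 1
              push_cast; ring
        _ = L ^ r * 2 ^ ((p:ℝ)/q) * 2 ^ (((p:ℝ)/q - 1) * (j:ℝ)) := by
            rw [mul_assoc, h22]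
    have hvolR : ∀ j : ℕ, volume (R j)
        = ENNReal.ofReal (4 * ((L ^ r * (2:ℝ) ^ ((p:ℝ)/q)) * ρ ^ j)) := by
      intro j
      rw [hRdef]
      simp only
      rw [volume_rect, ← ENNReal.ofReal_mul (by positivity)]
      congr 1
      rw [← hkey j]
      ring
    have hgeo : (1:ℝ≥0∞) - ENNReal.ofReal ρ = ENNReal.ofReal (1 - ρ) := by
      rw [ENNReal.ofReal_sub _ hρ0.le, ENNReal.ofReal_one]
    have hD0 : (0:ℝ) ≤ 4 * (L ^ r * (2:ℝ) ^ ((p:ℝ)/q)) := by positivity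
    have hsum : volume S ≤ ENNReal.ofReal ((4 * ((2:ℝ) ^ ((p:ℝ)/q)) / (1 - ρ)) * L ^ r) := by
      calc volume S ≤ volume (Z ∪ ⋃ j, R j) := measure_mono hsub2
        _ ≤ volume Z + volume (⋃ j, R j) := measure_union_le _ _
        _ = volume (⋃ j, R j) := by rw [hZ0, zero_add]
        _ ≤ ∑' j, volume (R j) := measure_iUnion_le _
        _ = ∑' j, ENNReal.ofReal (4 * ((L ^ r * (2:ℝ) ^ ((p:ℝ)/q)) * ρ ^ j)) := by
            simp_rw [hvolR]
        _ = ∑' j, ENNReal.ofReal (4 * (L ^ r * (2:ℝ) ^ ((p:ℝ)/q))) * ENNReal.ofReal ρ ^ j := by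
            congr 1; funext j
            rw [← ENNReal.ofReal_pow hρ0.le, ← ENNReal.ofReal_mul hD0]
            ring_nf
        _ = ENNReal.ofReal (4 * (L ^ r * (2:ℝ) ^ ((p:ℝ)/q))) * (1 - ENNReal.ofReal ρ)⁻¹ := by
            rw [ENNReal.tsum_mul_left, ENNReal.tsum_geometric]
        _ = ENNReal.ofReal ((4 * ((2:ℝ) ^ ((p:ℝ)/q)) / (1 - ρ)) * L ^ r) := by
            rw [hgeo, ← ENNReal.ofReal_inv_of_pos h1ρ, ← ENNReal.ofReal_mul hD0]
            congr 1
            field_simp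
    exact ENNReal.toReal_le_of_le_ofReal (by positivity) hsum
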